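/- (Key step for the scaling effect of the fixed-point iteration, Theorem on scaling.) Let Q be a probability measure on ℝ^p, μ ∈ ℝ^p, V a symmetric positive definite p×p matrix, and w : [0,∞) → [0,∞) measurable, such that 0 < ∫ w(d(x,μ,V)) d(x,μ,V) dQ(x) < ∞ and ∫ w(d(x,μ,V)) ‖x−μ‖² dQ(x) < ∞. Define the one-step update M = p · ( ∫ w(d(x,μ,V)) (x−μ)(x−μ)ᵀ dQ(x) ) / ( ∫ w(d(x,μ,V)) d(x,μ,V) dQ(x) ). Then M is symmetric positive semidefinite, trace(V⁻¹ M) = p, and det(M) ≤ det(V), with equality det(M) = det(V) if and only if M = V. -/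

import Mathlib

open MeasureTheory Matrix Finset

/-- Mahalanobis-type squared distance `d(x, μ, V) = (x−μ)ᵀ V⁻¹ (x−μ)`. -/
noncomputable def mahal {p : ℕ} (x μ : EuclideanSpace ℝ (Fin p))
    (V : Matrix (Fin p) (Fin p) ℝ) : ℝ :=
  ∑ i, ∑ j, (x i - μ i) * V⁻¹ i j * (x j - μ j)


lemma trace_eq_sum_eigs {n : ℕ} {A : Matrix (Fin n) (Fin n) ℝ} (hA : A.IsHermitian) :
    A.trace = ∑ i, hA.eigenvalues i := by
  simpa using hA.trace_eq_sum_eigenvalues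

lemma prod_eigs_helper (n : ℕ) (f : Fin n → ℝ) (hf : ∀ i, 0 ≤ f i) (hsum : ∑ i, f i = n) :
    (∏ i, f i ≤ 1) ∧ (∏ i, f i = 1 → ∀ i, f i = 1) := by
  have hexp : ∏ i, Real.exp (f i - 1) = 1 := by
    rw [← Real.exp_sum]; simp [Finset.sum_sub_distrib, hsum]
  have hle : ∀ i, f i ≤ Real.exp (f i - 1) := fun i => by
    linarith [Real.add_one_le_exp (f i - 1)]
  constructor
  · calc ∏ i, f i ≤ ∏ i, Real.exp (f i - 1) :=
          Finset.prod_le_prod (fun i _ => hf i) (fun i _ => hle i)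
      _ = 1 := hexp
  · intro h1 i
    by_contra hne
    have hpos : ∀ j, 0 < f j := by
      intro j
      rcases (hf j).lt_or_eq with h | h
      · exact h
      · exfalso
        rw [Finset.prod_eq_zero (Finset.mem_univ j) h.symm] at h1
        norm_num at h1
    have hlt : ∏ j, f j < ∏ j, Real.exp (f j - 1) := by
      refine Finset.prod_lt_prod (fun j _ => hpos j) (fun j _ => hle j) ⟨i, Finset.mem_univ i, ?_⟩
      have := Real.add_one_lt_exp (x := f i - 1) (by intro h; apply hne; linarith)
      linarith
    rw [h1, hexp] at hlt
    exact lt_irrefl _ hlt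

open scoped MatrixOrder in
lemma matrix_det_key {p : ℕ} (V M : Matrix (Fin p) (Fin p) ℝ) (hV : V.PosDef)
    (hM : M.PosSemidef) (htr : Matrix.trace (V⁻¹ * M) = (p : ℝ)) :
    M.det ≤ V.det ∧ (M.det = V.det ↔ M = V) := by
  have hVps := hV.posSemidef
  set S := CFC.sqrt V with hSdef
  have hS : S.PosSemidef := (CFC.sqrt_nonneg V).posSemidef
  have hSS : S * S = V := CFC.sqrt_mul_sqrt_self V hVps.nonneg
  have hdetV : 0 < V.det := hV.det_pos
  have hdetS : S.det ≠ 0 := by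
    intro h
    rw [← hSS, Matrix.det_mul, h, mul_zero] at hdetV
    exact lt_irrefl _ hdetV
  have hSu : IsUnit S.det := Ne.isUnit hdetS
  have hSinv : S⁻¹ * S = 1 := Matrix.nonsing_inv_mul S hSu
  have hSinv' : S * S⁻¹ = 1 := Matrix.mul_nonsing_inv S hSu
  have hSinvH : (S⁻¹).IsHermitian := hS.1.inv
  set A := S⁻¹ * M * S⁻¹ with hAdef
  have hApsd : A.PosSemidef := by
    have := hM.mul_mul_conjTranspose_same S⁻¹
    rwa [hSinvH.eq] at this
  have hMA : M = S * A * S := by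
    rw [hAdef]
    calc M = (S * S⁻¹) * M * (S⁻¹ * S) := by rw [hSinv', hSinv, Matrix.one_mul, Matrix.mul_one]
    _ = S * (S⁻¹ * M * S⁻¹) * S := by noncomm_ring
  have hVinv : V⁻¹ = S⁻¹ * S⁻¹ := by rw [← hSS, Matrix.mul_inv_rev]
  have htrA : A.trace = (p : ℝ) := by
    rw [hAdef, Matrix.trace_mul_cycle, ← hVinv, htr]
  have hdetM : M.det = A.det * V.det := by
    have h1 : M.det = S.det * A.det * S.det := by rw [hMA, Matrix.det_mul, Matrix.det_mul]
    have h2 : V.det = S.det * S.det := by rw [← hSS, Matrix.det_mul]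
    rw [h1, h2]; ring
  have hAH := hApsd.1
  have hprod : A.det = ∏ i, hAH.eigenvalues i := by
    simpa using hAH.det_eq_prod_eigenvalues
  have hsum : ∑ i, hAH.eigenvalues i = (p : ℝ) := by
    rw [← trace_eq_sum_eigs hAH, htrA]
  obtain ⟨hle1, heq1⟩ := prod_eigs_helper p hAH.eigenvalues hApsd.eigenvalues_nonneg hsum
  have hdetA_le : A.det ≤ 1 := by rw [hprod]; exact hle1
  constructor
  · calc M.det = A.det * V.det := hdetM
      _ ≤ 1 * V.det := by nlinarith
      _ = V.det := one_mul _
  · constructor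
    · intro hdeq
      have hA1 : A.det = 1 := by
        have : A.det * V.det = 1 * V.det := by rw [hdetM] at hdeq; rw [hdeq]; ring
        exact mul_right_cancel₀ (ne_of_gt hdetV) this
      have heigs : ∀ i, hAH.eigenvalues i = 1 := heq1 (by rw [← hprod]; exact hA1)
      have hAone : A = 1 := by
        have hsp := hAH.spectral_theorem
        have hdiag : Matrix.diagonal (RCLike.ofReal ∘ hAH.eigenvalues) = (1 : Matrix (Fin p) (Fin p) ℝ) := by
          have heq : (RCLike.ofReal ∘ hAH.eigenvalues : Fin p → ℝ) = fun _ => 1 := by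
            funext i; simp [heigs i]
          rw [heq]
          exact Matrix.diagonal_one
        rw [hdiag, map_one] at hsp
        exact hsp
      rw [hMA, hAone, Matrix.mul_one, hSS]
    · intro h; rw [h]

theorem fixed_point_update_det_le
    {p : ℕ} (hp : 1 ≤ p)
    (Q : Measure (EuclideanSpace ℝ (Fin p))) (hQ : IsProbabilityMeasure Q)
    (μ : EuclideanSpace ℝ (Fin p)) (V : Matrix (Fin p) (Fin p) ℝ)
    (hVsym : V.IsSymm) (hV : V.PosDef)
    (w : ℝ → ℝ) (hwmeas : Measurable w) (hw0 : ∀ u, 0 ≤ u → 0 ≤ w u)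
    (hint1 : Integrable (fun x => w (mahal x μ V) * mahal x μ V) Q)
    (hden : 0 < ∫ x, w (mahal x μ V) * mahal x μ V ∂Q)
    (hint2 : Integrable (fun x => w (mahal x μ V) * ‖x - μ‖ ^ 2) Q)
    (M : Matrix (Fin p) (Fin p) ℝ)
    (hM : ∀ i j : Fin p, M i j =
      (p : ℝ) * (∫ x, w (mahal x μ V) * ((x i - μ i) * (x j - μ j)) ∂Q) /
        (∫ x, w (mahal x μ V) * mahal x μ V ∂Q)) :
    M.PosSemidef ∧ Matrix.trace (V⁻¹ * M) = (p : ℝ) ∧ M.det ≤ V.det ∧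
      (M.det = V.det ↔ M = V) := by
  set c := ∫ x, w (mahal x μ V) * mahal x μ V ∂Q with hcdef
  have hcne : c ≠ 0 := ne_of_gt hden
  have hcoord : ∀ i : Fin p, Measurable fun x : EuclideanSpace ℝ (Fin p) => x i :=
    fun i => ((continuous_apply i).comp (PiLp.continuousLinearEquiv 2 ℝ _).continuous).measurable
  have hmeas_mahal : Measurable fun x : EuclideanSpace ℝ (Fin p) => mahal x μ V := by
    unfold mahal
    exact Finset.measurable_sum _ fun i _ => Finset.measurable_sum _ fun j _ =>
      (((hcoord i).sub measurable_const).mul_const _).mul ((hcoord j).sub measurable_const)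
  have hwm : Measurable fun x : EuclideanSpace ℝ (Fin p) => w (mahal x μ V) :=
    hwmeas.comp hmeas_mahal
  have hmnn : ∀ x : EuclideanSpace ℝ (Fin p), 0 ≤ mahal x μ V := by
    intro x
    have h := hV.inv.posSemidef.dotProduct_mulVec_nonneg (fun i => x i - μ i)
    unfold mahal
    simpa [dotProduct, Matrix.mulVec, Finset.mul_sum, mul_assoc] using h
  have hwnn : ∀ x : EuclideanSpace ℝ (Fin p), 0 ≤ w (mahal x μ V) :=
    fun x => hw0 _ (hmnn x)
  have habs : ∀ (x : EuclideanSpace ℝ (Fin p)) (i : Fin p), |x i - μ i| ≤ ‖x - μ‖ := by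
    intro x i
    have key : |(x - μ) i| ≤ ‖x - μ‖ := by
      rw [EuclideanSpace.norm_eq, ← Real.sqrt_sq_eq_abs]
      apply Real.sqrt_le_sqrt
      simp_rw [Real.norm_eq_abs, sq_abs]
      exact Finset.single_le_sum (f := fun j => (x - μ) j ^ 2) (fun j _ => sq_nonneg _)
        (Finset.mem_univ i)
    simpa using key
  have hgint : ∀ i j : Fin p,
      Integrable (fun x => w (mahal x μ V) * ((x i - μ i) * (x j - μ j))) Q := by
    intro i j
    refine hint2.mono' ?_ (ae_of_all _ fun x => ?_)
    · exact (hwm.mul (((hcoord i).sub measurable_const).mul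
        ((hcoord j).sub measurable_const))).aestronglyMeasurable
    · rw [Real.norm_eq_abs, abs_mul, abs_of_nonneg (hwnn x)]
      refine mul_le_mul_of_nonneg_left ?_ (hwnn x)
      rw [abs_mul, sq]
      exact mul_le_mul (habs x i) (habs x j) (abs_nonneg _) (norm_nonneg _)
  -- quadratic key
  have hquad : ∀ v : Fin p → ℝ,
      ∑ i, ∑ j, v i * v j * (∫ x, w (mahal x μ V) * ((x i - μ i) * (x j - μ j)) ∂Q)
      = ∫ x, w (mahal x μ V) * (∑ i, v i * (x i - μ i)) ^ 2 ∂Q := by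
    intro v
    calc ∑ i, ∑ j, v i * v j * (∫ x, w (mahal x μ V) * ((x i - μ i) * (x j - μ j)) ∂Q)
        = ∑ i, ∑ j, ∫ x, v i * v j * (w (mahal x μ V) * ((x i - μ i) * (x j - μ j))) ∂Q := by
          refine Finset.sum_congr rfl fun i _ => Finset.sum_congr rfl fun j _ => ?_
          rw [integral_const_mul]
      _ = ∑ i, ∫ x, ∑ j, v i * v j * (w (mahal x μ V) * ((x i - μ i) * (x j - μ j))) ∂Q := by
          refine Finset.sum_congr rfl fun i _ => ?_
          exact (integral_finset_sum _ fun j _ => (hgint i j).const_mul _).symm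
      _ = ∫ x, ∑ i, ∑ j, v i * v j * (w (mahal x μ V) * ((x i - μ i) * (x j - μ j))) ∂Q :=
          (integral_finset_sum _ fun i _ => integrable_finset_sum _ fun j _ =>
            (hgint i j).const_mul _).symm
      _ = ∫ x, w (mahal x μ V) * (∑ i, v i * (x i - μ i)) ^ 2 ∂Q := by
          congr 1; funext x
          rw [sq, Finset.sum_mul_sum, Finset.mul_sum]
          refine Finset.sum_congr rfl fun i _ => ?_
          rw [Finset.mul_sum]
          refine Finset.sum_congr rfl fun j _ => ?_
          ring
  have hMpsd : M.PosSemidef := by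
    refine .of_dotProduct_mulVec_nonneg ?_ ?_
    · have hNsymm : ∀ i j : Fin p,
          (∫ x, w (mahal x μ V) * ((x j - μ j) * (x i - μ i)) ∂Q)
          = ∫ x, w (mahal x μ V) * ((x i - μ i) * (x j - μ j)) ∂Q := by
        intro i j
        congr 1; funext x; ring
      ext i j
      rw [Matrix.conjTranspose_apply, star_trivial, hM i j, hM j i, hNsymm i j]
    · intro v
      have expand : dotProduct (star v) (M *ᵥ v) = ((p : ℝ) / c) *
          ∑ i, ∑ j, v i * v j * (∫ x, w (mahal x μ V) * ((x i - μ i) * (x j - μ j)) ∂Q) := by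
        simp only [star_trivial, dotProduct, Matrix.mulVec, hM]
        rw [Finset.mul_sum]
        refine Finset.sum_congr rfl fun i _ => ?_
        rw [Finset.mul_sum, Finset.mul_sum]
        refine Finset.sum_congr rfl fun j _ => ?_
        ring
      rw [expand, hquad v]
      refine mul_nonneg (div_nonneg (Nat.cast_nonneg p) hden.le) ?_
      exact integral_nonneg fun x => mul_nonneg (hwnn x) (sq_nonneg _)
  have htrace : Matrix.trace (V⁻¹ * M) = (p : ℝ) := by
    have expand : Matrix.trace (V⁻¹ * M) = ((p : ℝ) / c) *
        ∑ i, ∑ j, V⁻¹ i j * (∫ x, w (mahal x μ V) * ((x j - μ j) * (x i - μ i)) ∂Q) := by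
      simp only [Matrix.trace, Matrix.diag, Matrix.mul_apply, hM]
      rw [Finset.mul_sum]
      refine Finset.sum_congr rfl fun i _ => ?_
      rw [Finset.mul_sum]
      refine Finset.sum_congr rfl fun j _ => ?_
      ring
    have hsum : ∑ i, ∑ j, V⁻¹ i j * (∫ x, w (mahal x μ V) * ((x j - μ j) * (x i - μ i)) ∂Q)
        = c := by
      calc ∑ i, ∑ j, V⁻¹ i j * (∫ x, w (mahal x μ V) * ((x j - μ j) * (x i - μ i)) ∂Q)
          = ∑ i, ∑ j, ∫ x, V⁻¹ i j * (w (mahal x μ V) * ((x j - μ j) * (x i - μ i))) ∂Q := by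
            refine Finset.sum_congr rfl fun i _ => Finset.sum_congr rfl fun j _ => ?_
            rw [integral_const_mul]
        _ = ∑ i, ∫ x, ∑ j, V⁻¹ i j * (w (mahal x μ V) * ((x j - μ j) * (x i - μ i))) ∂Q := by
            refine Finset.sum_congr rfl fun i _ => ?_
            exact (integral_finset_sum _ fun j _ => (hgint j i).const_mul _).symm
        _ = ∫ x, ∑ i, ∑ j, V⁻¹ i j * (w (mahal x μ V) * ((x j - μ j) * (x i - μ i))) ∂Q :=
            (integral_finset_sum _ fun i _ => integrable_finset_sum _ fun j _ =>
              (hgint j i).const_mul _).symm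
        _ = c := by
            rw [hcdef]
            congr 1; funext x
            unfold mahal
            rw [Finset.mul_sum]
            refine Finset.sum_congr rfl fun i _ => ?_
            rw [Finset.mul_sum]
            refine Finset.sum_congr rfl fun j _ => ?_
            ring
    rw [expand, hsum, div_mul_cancel₀ _ hcne]
  obtain ⟨hle, hiff⟩ := matrix_det_key V M hV hMpsd htrace
  exact ⟨hMpsd, htrace, hle, hiff⟩
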